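/- Let $\sigma>0$, $N>0$, $\alpha,r\in\mathbb{R}^n_{>0}$ with $\sum_j\alpha_j=1$ and $N > \sum_j r_j$. Let $l^\sigma$ be the unique positive solution of $N = \sum_j[\min\{l N\alpha_j, r_j\} + \tfrac{1}{\sigma}(lN\alpha_j - r_j)_+]$. Then for all sufficiently large $\sigma$, $l^\sigma = \frac{\sigma(N-\sum_j r_j) + \sum_j r_j}{N}$; consequently, as $\sigma\to\infty$, $\min\{l^\sigma N\alpha_j, r_j\}\to r_j$ and $\tfrac{1}{\sigma}(l^\sigma N\alpha_j - r_j)_+ \to (N-\sum_i r_i)\alpha_j$ for each $j$. -/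

import Mathlib

open Filter


lemma aux_term_lt {x y r c : ℝ} (hxy : x < y) (hc : 0 < c) :
    min x r + c * max (x - r) 0 < min y r + c * max (y - r) 0 := by
  have hmx : min x r = x - max (x - r) 0 := by
    rcases le_total x r with h | h
    · simp [min_eq_left h, max_eq_right (by linarith : x - r ≤ 0)]
    · simp [min_eq_right h, max_eq_left (by linarith : (0:ℝ) ≤ x - r)]
  have hmy : min y r = y - max (y - r) 0 := by
    rcases le_total y r with h | h
    · simp [min_eq_left h, max_eq_right (by linarith : y - r ≤ 0)]
    · simp [min_eq_right h, max_eq_left (by linarith : (0:ℝ) ≤ y - r)]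
  set Dx := max (x - r) 0 with hDx
  set Dy := max (y - r) 0 with hDy
  have h0x : 0 ≤ Dx := le_max_right _ _
  have h1 : Dx ≤ Dy := max_le_max (by linarith) le_rfl
  have h2 : Dy ≤ Dx + (y - x) := by
    rcases le_total (y - r) 0 with h | h
    · have := max_eq_right h
      linarith [h0x]
    · have hDyeq : Dy = y - r := max_eq_left h
      have := le_max_left (x - r) (0:ℝ)
      linarith
  rw [hmx, hmy]
  rcases lt_or_ge Dy (Dx + (y - x)) with h | h
  · nlinarith [mul_le_mul_of_nonneg_left h1 hc.le]
  · have heq : Dy = Dx + (y - x) := le_antisymm h2 h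
    nlinarith [mul_pos hc (sub_pos.2 hxy)]

lemma aux_strictMono {n : ℕ} (hn : 0 < n) (N : ℝ) (hN : 0 < N) (α r : Fin n → ℝ)
    (hα : ∀ j, 0 < α j) (σ : ℝ) (hσ : 0 < σ) :
    StrictMono (fun t : ℝ => ∑ j, (min (t * N * α j) (r j) + σ⁻¹ * max (t * N * α j - r j) 0)) := by
  intro a b hab
  have hne : (Finset.univ : Finset (Fin n)).Nonempty := by
    simpa [Finset.univ_nonempty_iff] using Fin.pos_iff_nonempty.mp hn
  refine Finset.sum_lt_sum_of_nonempty hne fun j _ => ?_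
  have hxy : a * N * α j < b * N * α j := by
    have := mul_pos hN (hα j)
    nlinarith
  exact aux_term_lt hxy (inv_pos.2 hσ)

/-- If `N > ∑ r_j` and `l^σ` is the positive solution of
`N = ∑_j [min(lNα_j, r_j) + (1/σ)(lNα_j - r_j)_+]`, then for sufficiently large `σ` one
has `l^σ = (σ(N - ∑ r_j) + ∑ r_j)/N`, and as `σ → ∞`, `min(l^σ N α_j, r_j) → r_j` and
`(1/σ)(l^σ N α_j - r_j)_+ → (N - ∑ r_i) α_j` for each `j`. -/
theorem lsigma_large_sigma {n : ℕ}
    (N : ℝ) (hN : 0 < N)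
    (α r : Fin n → ℝ) (hα : ∀ j, 0 < α j) (hr : ∀ j, 0 < r j)
    (hsum : ∑ j, α j = 1)
    (hNbig : (∑ j, r j) < N)
    (l : ℝ → ℝ)
    (hl : ∀ σ > (0:ℝ), 0 < l σ ∧
      N = ∑ j, (min (l σ * N * α j) (r j) + σ⁻¹ * max (l σ * N * α j - r j) 0)) :
    (∃ σ₀ > (0:ℝ), ∀ σ ≥ σ₀, l σ = (σ * (N - ∑ j, r j) + ∑ j, r j) / N) ∧
    (∀ j, Tendsto (fun σ => min (l σ * N * α j) (r j)) atTop (nhds (r j))) ∧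
    (∀ j, Tendsto (fun σ => σ⁻¹ * max (l σ * N * α j - r j) 0) atTop
      (nhds ((N - ∑ i, r i) * α j))) := by
  rcases Nat.eq_zero_or_pos n with hn | hn
  · subst hn; simp at hsum
  set S := ∑ j, r j with hS
  have hSN : 0 < N - S := by linarith
  -- bound σ₀
  obtain ⟨M, hM⟩ := Finite.exists_le fun j => r j / ((N - S) * α j)
  set σ₀ : ℝ := max 1 M with hσ₀
  have hσ₀1 : (1:ℝ) ≤ σ₀ := le_max_left _ _
  have hσ₀pos : (0:ℝ) < σ₀ := lt_of_lt_of_le one_pos hσ₀1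
  have hSpos : 0 < S := by
    have hne : (Finset.univ : Finset (Fin n)).Nonempty := by
      simpa [Finset.univ_nonempty_iff] using Fin.pos_iff_nonempty.mp hn
    exact Finset.sum_pos (fun j _ => hr j) hne
  -- key : for σ ≥ σ₀, l σ equals the explicit formula
  have key : ∀ σ ≥ σ₀, l σ = (σ * (N - S) + S) / N := by
    intro σ hσ
    have hσpos : 0 < σ := lt_of_lt_of_le hσ₀pos hσ
    set L : ℝ := (σ * (N - S) + S) / N with hL
    have hLN : L * N = σ * (N - S) + S := by
      rw [hL]; field_simp
    have hbig : ∀ j, r j ≤ L * N * α j := by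
      intro j
      have h1 : r j / ((N - S) * α j) ≤ σ := le_trans (hM j) (le_trans (le_max_right 1 M) hσ)
      have h2 : 0 < (N - S) * α j := mul_pos hSN (hα j)
      have h3 : r j ≤ σ * ((N - S) * α j) := by
        rw [div_le_iff₀ h2] at h1; linarith
      have h4 : 0 ≤ S * α j := le_of_lt (mul_pos hSpos (hα j))
      calc r j ≤ σ * ((N - S) * α j) := h3
        _ ≤ σ * ((N - S) * α j) + S * α j := by linarith
        _ = L * N * α j := by rw [hLN]; ring
    have hsol : N = ∑ j, (min (L * N * α j) (r j) + σ⁻¹ * max (L * N * α j - r j) 0) := by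
      have : ∀ j, min (L * N * α j) (r j) + σ⁻¹ * max (L * N * α j - r j) 0
          = r j + σ⁻¹ * (L * N * α j - r j) := by
        intro j
        rw [min_eq_right (hbig j), max_eq_left (by linarith [hbig j])]
      rw [Finset.sum_congr rfl fun j _ => this j]
      rw [Finset.sum_add_distrib, ← Finset.mul_sum]
      have : ∑ j, (L * N * α j - r j) = L * N - S := by
        rw [Finset.sum_sub_distrib, ← Finset.mul_sum, hsum]
        simp [hS]
      rw [this, hLN]
      field_simp
      rw [← hS]; ring
    obtain ⟨hlpos, hleq⟩ := hl σ hσpos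
    exact (aux_strictMono hn N hN α r hα σ hσpos).injective (by rw [← hleq, ← hsol])
  refine ⟨⟨σ₀, hσ₀pos, key⟩, ?_, ?_⟩
  · intro j
    have hev : (fun σ => min (l σ * N * α j) (r j)) =ᶠ[atTop] fun _ => r j := by
      filter_upwards [eventually_ge_atTop σ₀] with σ hσ
      have hσpos : 0 < σ := lt_of_lt_of_le hσ₀pos hσ
      rw [key σ hσ]
      set L : ℝ := (σ * (N - S) + S) / N with hL
      have hLN : L * N = σ * (N - S) + S := by rw [hL]; field_simp
      have h1 : r j / ((N - S) * α j) ≤ σ := le_trans (hM j) (le_trans (le_max_right 1 M) hσ)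
      have h2 : 0 < (N - S) * α j := mul_pos hSN (hα j)
      have h3 : r j ≤ σ * ((N - S) * α j) := by rw [div_le_iff₀ h2] at h1; linarith
      have h4 : 0 ≤ S * α j := le_of_lt (mul_pos hSpos (hα j))
      have hbig : r j ≤ L * N * α j := by
        calc r j ≤ σ * ((N - S) * α j) := h3
          _ ≤ σ * ((N - S) * α j) + S * α j := by linarith
          _ = L * N * α j := by rw [hLN]; ring
      exact min_eq_right hbig
    exact Tendsto.congr' hev.symm tendsto_const_nhds
  · intro j
    have hlim : Tendsto (fun σ : ℝ => (N - S) * α j + σ⁻¹ * (S * α j - r j)) atTop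
        (nhds ((N - S) * α j)) := by
      have : Tendsto (fun σ : ℝ => σ⁻¹ * (S * α j - r j)) atTop (nhds 0) := by
        simpa using tendsto_inv_atTop_zero.mul_const (S * α j - r j)
      simpa using tendsto_const_nhds.add this
    refine Tendsto.congr' ?_ hlim
    filter_upwards [eventually_ge_atTop σ₀] with σ hσ
    have hσpos : 0 < σ := lt_of_lt_of_le hσ₀pos hσ
    rw [key σ hσ]
    set L : ℝ := (σ * (N - S) + S) / N with hL
    have hLN : L * N = σ * (N - S) + S := by rw [hL]; field_simp
    have h1 : r j / ((N - S) * α j) ≤ σ := le_trans (hM j) (le_trans (le_max_right 1 M) hσ)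
    have h2 : 0 < (N - S) * α j := mul_pos hSN (hα j)
    have h3 : r j ≤ σ * ((N - S) * α j) := by rw [div_le_iff₀ h2] at h1; linarith
    have h4 : 0 ≤ S * α j := le_of_lt (mul_pos hSpos (hα j))
    have hbig : r j ≤ L * N * α j := by
      calc r j ≤ σ * ((N - S) * α j) := h3
        _ ≤ σ * ((N - S) * α j) + S * α j := by linarith
        _ = L * N * α j := by rw [hLN]; ring
    have hLNα : L * N * α j = σ * (N - S) * α j + S * α j := by rw [hLN]; ring
    rw [show max (L * N * α j - r j) 0 = L * N * α j - r j from max_eq_left (by linarith)]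
    rw [hLNα]
    field_simp
    ring
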